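/- Let E be a real inner product space, let g : E → ℝ be convex, let s : E → ℝ be differentiable, and let α > 0. Fix x_prev ∈ E, set y := x_prev - α∇s(x_prev), and let x ∈ E minimize the map z ↦ g(z) + (1/(2α))‖z - y‖² over E. Then for every z ∈ E, g(x) ≤ g(z) - (1/α)⟪x_prev - x, z - x⟫ + ⟪∇s(x_prev), z - x⟫. -/

import Mathlib

open scoped RealInnerProductSpace

/-- Inequality (28): bound on the nonsmooth part `g` at the proximal-gradient iterate
`x = prox_g^α(x_prev - α∇s(x_prev))`. -/
theorem prox_gradient_nonsmooth_bound
    {E : Type*} [NormedAddCommGroup E] [InnerProductSpace ℝ E]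
    (g : E → ℝ) (hg_conv : ConvexOn ℝ Set.univ g)
    (s : E → ℝ) (ds : E → E)
    (hs_diff : ∀ u : E, HasFDerivAt s (innerSL ℝ (ds u)) u)
    (α : ℝ) (hα : 0 < α)
    (xprev : E) (y : E) (hy : y = xprev - α • ds xprev)
    (x : E)
    (hx_min : ∀ z : E, g x + 1 / (2 * α) * ‖x - y‖ ^ 2 ≤ g z + 1 / (2 * α) * ‖z - y‖ ^ 2) :
    ∀ z : E, g x ≤ g z - 1 / α * ⟪xprev - x, z - x⟫ + ⟪ds xprev, z - x⟫ := by
  intro z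
  -- key subgradient inequality
  have key : g x ≤ g z + 1 / α * ⟪x - y, z - x⟫ := by
    by_cases hzx : z = x
    · simp [hzx]
    by_contra hlt
    push_neg at hlt
    set c : ℝ := ⟪x - y, z - x⟫ with hc
    set K : ℝ := ‖z - x‖ ^ 2 with hK
    have hKpos : 0 < K := by
      have hzx' : z - x ≠ 0 := sub_ne_zero.mpr hzx
      rw [hK]; exact pow_pos (norm_pos_iff.mpr hzx') 2
    set ε : ℝ := g x - (g z + 1 / α * c) with hε
    have hεpos : 0 < ε := by simp only [hε]; linarith
    set t : ℝ := min 1 (α * ε / K) with ht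
    have htpos : 0 < t := lt_min one_pos (by positivity)
    have ht1 : t ≤ 1 := min_le_left _ _
    have htle : t ≤ α * ε / K := min_le_right _ _
    -- convexity
    have hconv : g (x + t • (z - x)) ≤ (1 - t) * g x + t * g z := by
      have := hg_conv.2 (Set.mem_univ x) (Set.mem_univ z)
        (by linarith : (0:ℝ) ≤ 1 - t) (le_of_lt htpos) (by ring)
      have he : (1 - t) • x + t • z = x + t • (z - x) := by
        simp [smul_sub, sub_smul]; abel
      rw [he] at this
      simp only [smul_eq_mul] at this
      linarith [this]
    -- minimality at x + t • (z - x)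
    have hmin := hx_min (x + t • (z - x))
    -- norm expansion
    have hexp : ‖x + t • (z - x) - y‖ ^ 2 = ‖x - y‖ ^ 2 + 2 * t * c + t ^ 2 * K := by
      have h1 : x + t • (z - x) - y = (x - y) + t • (z - x) := by abel
      rw [h1, norm_add_sq_real, real_inner_smul_right, norm_smul]
      simp [hc, hK, abs_of_pos htpos]
      ring
    rw [hexp] at hmin
    have hαne : α ≠ 0 := ne_of_gt hα
    -- derive g x ≤ g z + c/α + t*K/(2α)
    have h2 : t * g x ≤ t * g z + t * (1 / α * c) + t ^ 2 * (K / (2 * α)) := by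
      have : g x + 1 / (2 * α) * ‖x - y‖ ^ 2 ≤
          (1 - t) * g x + t * g z + 1 / (2 * α) * (‖x - y‖ ^ 2 + 2 * t * c + t ^ 2 * K) :=
        le_trans hmin (by linarith)
      have h3 : 1 / (2 * α) * (2 * t * c) = t * (1 / α * c) := by
        field_simp
      have h4 : 1 / (2 * α) * (t ^ 2 * K) = t ^ 2 * (K / (2 * α)) := by
        field_simp
      nlinarith [this]
    have h5 : g x ≤ g z + 1 / α * c + t * (K / (2 * α)) := by
      have := mul_le_mul_of_nonneg_left (le_of_eq (rfl : t * g x = t * g x)) (le_of_lt htpos)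
      have h6 : t * g x ≤ t * (g z + 1 / α * c + t * (K / (2 * α))) := by
        nlinarith [h2]
      exact le_of_mul_le_mul_left (by linarith [h6]) htpos
    have h7 : t * (K / (2 * α)) ≤ ε / 2 := by
      have htK : t * K ≤ α * ε := by
        calc t * K ≤ (α * ε / K) * K := mul_le_mul_of_nonneg_right htle hKpos.le
          _ = α * ε := by field_simp
      have heq : t * (K / (2 * α)) = (t * K) / (2 * α) := by ring
      rw [heq, div_le_iff₀ (by positivity : (0:ℝ) < 2 * α)]
      calc t * K ≤ α * ε := htK
        _ = ε / 2 * (2 * α) := by ring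
    have : g x ≤ g z + 1 / α * c + ε / 2 := le_trans h5 (by linarith)
    linarith
  -- rewrite inner product
  have hαne : α ≠ 0 := ne_of_gt hα
  have hrw : 1 / α * ⟪x - y, z - x⟫ =
      -(1 / α * ⟪xprev - x, z - x⟫) + ⟪ds xprev, z - x⟫ := by
    have hxy : x - y = -(xprev - x) + α • ds xprev := by
      rw [hy]; abel
    rw [hxy, inner_add_left, inner_neg_left, real_inner_smul_left]
    field_simp
  linarith [key, hrw.le, hrw.ge]
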